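/- Under the assumptions K + L = V, K ∩ L = {0}, the operators P+Q and 2I-(P+Q) are strictly positive (positive and injective), where P, Q are the orthogonal projections onto K, L. -/

import Mathlib

open ContinuousLinearMap
open scoped RealInnerProductSpace

theorem stmt_9 {V : Type*} [NormedAddCommGroup V] [InnerProductSpace ℝ V] [CompleteSpace V]
    (K L : Submodule ℝ V) (hKc : IsClosed (K : Set V)) (hLc : IsClosed (L : Set V))
    (hsup : K ⊔ L = ⊤) (hinf : K ⊓ L = ⊥)
    (P Q : V →L[ℝ] V) (hPsa : IsSelfAdjoint P) (hQsa : IsSelfAdjoint Q)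
    (hPK : ∀ x, P x ∈ K) (hPfix : ∀ x ∈ K, P x = x)
    (hQL : ∀ x, Q x ∈ L) (hQfix : ∀ x ∈ L, Q x = x) :
    ((P + Q).IsPositive ∧ Function.Injective (P + Q)) ∧
    (((2 : V →L[ℝ] V) - (P + Q)).IsPositive ∧ Function.Injective ((2 : V →L[ℝ] V) - (P + Q))) := by
  have hPsym : ∀ x y : V, (inner ℝ (P x) (y) : ℝ) = (inner ℝ (x) (P y) : ℝ) := fun x y => hPsa.isSymmetric x y
  have hQsym : ∀ x y : V, (inner ℝ (Q x) (y) : ℝ) = (inner ℝ (x) (Q y) : ℝ) := fun x y => hQsa.isSymmetric x y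
  have hP2 : ∀ x, (inner ℝ (P x) (x) : ℝ) = ‖P x‖ ^ 2 := by
    intro x
    have h : (inner ℝ (P x) (x) : ℝ) = (inner ℝ (P x) (P x) : ℝ) := by
      conv_lhs => rw [← hPfix (P x) (hPK x)]
      rw [hPsym]
    rw [h, real_inner_self_eq_norm_sq]
  have hQ2 : ∀ x, (inner ℝ (Q x) (x) : ℝ) = ‖Q x‖ ^ 2 := by
    intro x
    have h : (inner ℝ (Q x) (x) : ℝ) = (inner ℝ (Q x) (Q x) : ℝ) := by
      conv_lhs => rw [← hQfix (Q x) (hQL x)]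
      rw [hQsym]
    rw [h, real_inner_self_eq_norm_sq]
  -- (1-P) lemmas
  have hRP : ∀ x, (inner ℝ (x - P x) (x) : ℝ) = ‖x - P x‖ ^ 2 := by
    intro x
    have h0 : P (x - P x) = 0 := by
      simp [map_sub, hPfix (P x) (hPK x)]
    have : (inner ℝ (x - P x) (x) : ℝ) = (inner ℝ (x - P x) (x - P x) : ℝ) := by
      rw [inner_sub_right]
      rw [← hPsym, h0, inner_zero_left, sub_zero]
    rw [this, real_inner_self_eq_norm_sq]
  have hRQ : ∀ x, (inner ℝ (x - Q x) (x) : ℝ) = ‖x - Q x‖ ^ 2 := by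
    intro x
    have h0 : Q (x - Q x) = 0 := by
      simp [map_sub, hQfix (Q x) (hQL x)]
    have : (inner ℝ (x - Q x) (x) : ℝ) = (inner ℝ (x - Q x) (x - Q x) : ℝ) := by
      rw [inner_sub_right]
      rw [← hQsym, h0, inner_zero_left, sub_zero]
    rw [this, real_inner_self_eq_norm_sq]
  have h2app : ∀ x : V, ((2 : V →L[ℝ] V) - (P + Q)) x = (x - P x) + (x - Q x) := by
    intro x
    have : (2 : V →L[ℝ] V) = 1 + 1 := by norm_num
    rw [sub_apply, this, add_apply, ContinuousLinearMap.one_apply, add_apply]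
    abel
  have hsa2 : IsSelfAdjoint ((2 : V →L[ℝ] V) - (P + Q)) := by
    have h1 : IsSelfAdjoint (1 : V →L[ℝ] V) := .one _
    have : IsSelfAdjoint ((1 : V →L[ℝ] V) + 1) := h1.add h1
    have h2 : IsSelfAdjoint (2 : V →L[ℝ] V) := by
      convert this using 1; norm_num
    exact h2.sub (hPsa.add hQsa)
  refine ⟨⟨⟨(hPsa.add hQsa).isSymmetric, ?_⟩, ?_⟩, ⟨⟨hsa2.isSymmetric, ?_⟩, ?_⟩⟩
  · intro x
    have : (P + Q).reApplyInnerSelf x = ‖P x‖ ^ 2 + ‖Q x‖ ^ 2 := by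
      simp [reApplyInnerSelf, add_apply, inner_add_left, hP2, hQ2]
    rw [this]; positivity
  · -- injective P+Q
    intro x y hxy
    rw [← sub_eq_zero, ← map_sub] at hxy
    set z := x - y with hz
    have hzero : (inner ℝ ((P + Q) z) (z) : ℝ) = 0 := by rw [hxy, inner_zero_left]
    rw [add_apply, inner_add_left, hP2, hQ2] at hzero
    have hPz : P z = 0 := by
      have := sq_nonneg ‖P z‖; have := sq_nonneg ‖Q z‖
      have : ‖P z‖ ^ 2 = 0 := by nlinarith
      simpa using this
    have hQz : Q z = 0 := by
      have := sq_nonneg ‖P z‖; have := sq_nonneg ‖Q z‖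
      have : ‖Q z‖ ^ 2 = 0 := by nlinarith
      simpa using this
    have hzmem : z ∈ (⊤ : Submodule ℝ V) := Submodule.mem_top
    rw [← hsup] at hzmem
    obtain ⟨k, hk, l, hl, hkl⟩ := Submodule.mem_sup.mp hzmem
    have hzk : (inner ℝ (z) (k) : ℝ) = 0 := by
      rw [← hPfix k hk, ← hPsym, hPz, inner_zero_left]
    have hzl : (inner ℝ (z) (l) : ℝ) = 0 := by
      rw [← hQfix l hl, ← hQsym, hQz, inner_zero_left]
    have : (inner ℝ (z) (z) : ℝ) = 0 := by
      have e : (inner ℝ (z) (z) : ℝ) = (inner ℝ (z) (k + l) : ℝ) := by rw [hkl]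
      rw [e, inner_add_right, hzk, hzl]; ring
    have : z = 0 := by rwa [inner_self_eq_zero] at this
    exact sub_eq_zero.mp this
  · intro x
    have : ((2 : V →L[ℝ] V) - (P + Q)).reApplyInnerSelf x
        = ‖x - P x‖ ^ 2 + ‖x - Q x‖ ^ 2 := by
      simp only [reApplyInnerSelf, h2app, inner_add_left, hRP, hRQ]
      norm_num
    rw [this]; positivity
  · intro x y hxy
    rw [← sub_eq_zero, ← map_sub] at hxy
    set z := x - y with hz
    have hzero : (inner ℝ (((2 : V →L[ℝ] V) - (P + Q)) z) (z) : ℝ) = 0 := by rw [hxy, inner_zero_left]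
    rw [h2app, inner_add_left, hRP, hRQ] at hzero
    have hPz : z - P z = 0 := by
      have := sq_nonneg ‖z - P z‖; have := sq_nonneg ‖z - Q z‖
      have : ‖z - P z‖ ^ 2 = 0 := by nlinarith
      simpa using this
    have hQz : z - Q z = 0 := by
      have := sq_nonneg ‖z - P z‖; have := sq_nonneg ‖z - Q z‖
      have : ‖z - Q z‖ ^ 2 = 0 := by nlinarith
      simpa using this
    have hzK : z ∈ K := by rw [sub_eq_zero.mp hPz]; exact hPK z
    have hzL : z ∈ L := by rw [sub_eq_zero.mp hQz]; exact hQL z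
    have : z ∈ K ⊓ L := ⟨hzK, hzL⟩
    rw [hinf, Submodule.mem_bot] at this
    exact sub_eq_zero.mp this
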